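/- For all natural numbers n and m, every path component of the space E(n,m) is contractible; that is, the mapping spaces of the topological cyclic category are homotopy discrete. -/

import Mathlib

/-- The circle `T = ℝ/ℤ`. -/
abbrev Circ : Type := AddCircle (1 : ℝ)

/-- `F : ℝ → ℝ` is a lift of `f : T → T` witnessing that `f` is a monotone degree-one map. -/
def IsLift (f : C(Circ, Circ)) (F : ℝ → ℝ) : Prop :=
  Continuous F ∧ Monotone F ∧ (∀ x : ℝ, F (x + 1) = F x + 1) ∧
    ∀ x : ℝ, f (x : Circ) = ((F x : ℝ) : Circ)

/-- The marked set `n̲ ⊆ T`, the image of `(1/(n+1))·ℤ`. -/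
def markedCirc (n : ℕ) : Set Circ :=
  {x | ∃ k : ℤ, x = (((k : ℝ) / ((n : ℝ) + 1) : ℝ) : Circ)}

/-- The mapping space `Map_{Λ_Top}(⟨n⟩,⟨m⟩)` of the topological cyclic category:
monotone degree-one maps of the circle preserving the marked points. -/
abbrev ECirc (n m : ℕ) : Type :=
  {f : C(Circ, Circ) //
    (∃ F : ℝ → ℝ, IsLift f F) ∧ ∀ x ∈ markedCirc n, f x ∈ markedCirc m}

noncomputable section
namespace CircAux

lemma circ_coe_eq_coe_iff {a b : ℝ} : (a : Circ) = (b : Circ) ↔ ∃ k : ℤ, a - b = k := by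
  rw [QuotientAddGroup.eq]
  constructor
  · rintro ⟨k, hk⟩
    simp only [zsmul_eq_mul, mul_one] at hk
    exact ⟨-k, by push_cast; linarith⟩
  · rintro ⟨k, hk⟩
    exact ⟨-k, by simp only [zsmul_eq_mul, mul_one]; push_cast; linarith⟩

lemma circ_surj (q : Circ) : ∃ x : ℝ, q = (x : Circ) := by
  obtain ⟨x, rfl⟩ := QuotientAddGroup.mk_surjective q
  exact ⟨x, rfl⟩

lemma circ_dist_coe_le (a b : ℝ) : dist (a : Circ) (b : Circ) ≤ |a - b| := by
  rw [dist_eq_norm, ← AddCircle.coe_sub, AddCircle.norm_eq]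
  simp only [inv_one, one_mul, mul_one]
  calc |a - b - round (a - b)| ≤ |a - b - ((0:ℤ):ℝ)| := round_le (a - b) 0
    _ = |a - b| := by norm_num


lemma circ_norm_coe {d : ℝ} (h : |d| ≤ 1/2) : ‖(d : Circ)‖ = |d| := by
  rw [AddCircle.norm_coe_eq_abs_iff (1:ℝ) one_ne_zero]
  simpa using h

lemma addInt {F : ℝ → ℝ} (hp : ∀ x, F (x + 1) = F x + 1) (x : ℝ) (k : ℤ) :
    F (x + k) = F x + k := by
  have hm : ∀ y, F (y - 1) = F y - 1 := by
    intro y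
    have := hp (y - 1)
    rw [sub_add_cancel] at this
    linarith
  induction k using Int.induction_on with
  | zero => simp
  | succ i ih =>
      have h1 : (x + (i + 1 : ℤ) : ℝ) = (x + (i:ℤ)) + 1 := by push_cast; ring
      rw [h1, hp, ih]; push_cast; ring
  | pred i ih =>
      have h1 : (x + (-i - 1 : ℤ) : ℝ) = (x + (-i:ℤ)) - 1 := by push_cast; ring
      rw [h1, hm, ih]; push_cast; ring

/-- Descend a degree-one map of the reals to the circle. -/
def descend (F : ℝ → ℝ) (hc : Continuous F) (hp : ∀ x, F (x + 1) = F x + 1) :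
    C(Circ, Circ) where
  toFun := fun q => Quotient.liftOn' q (fun x => ((F x : ℝ) : Circ)) (by
    intro a b hab
    rw [QuotientAddGroup.leftRel_apply] at hab
    obtain ⟨k, hk⟩ := hab
    simp only [zsmul_eq_mul, mul_one] at hk
    have hb : b = a + (k : ℤ) := by push_cast; linarith
    simp only [hb, addInt hp a k]
    exact (circ_coe_eq_coe_iff.mpr ⟨-k, by push_cast; ring⟩))
  continuous_toFun := by
    rw [(QuotientAddGroup.isQuotientMap_mk _).continuous_iff]
    exact continuous_coinduced_rng.comp hc

lemma descend_coe (F : ℝ → ℝ) (hc : Continuous F) (hp : ∀ x, F (x + 1) = F x + 1) (x : ℝ) :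
    descend F hc hp (x : Circ) = ((F x : ℝ) : Circ) := rfl

lemma descend_eq {g : C(Circ, Circ)} {F : ℝ → ℝ} (h : IsLift g F)
    (hc : Continuous F) (hp : ∀ x, F (x + 1) = F x + 1) : descend F hc hp = g := by
  ext q
  obtain ⟨x, rfl⟩ := circ_surj q
  rw [descend_coe, h.2.2.2]

lemma isLift_descend {F : ℝ → ℝ} (hc : Continuous F) (hm : Monotone F)
    (hp : ∀ x, F (x + 1) = F x + 1) : IsLift (descend F hc hp) F :=
  ⟨hc, hm, hp, fun _ => rfl⟩

lemma intConst {Y : Type} [TopologicalSpace Y] [PreconnectedSpace Y] {h : Y → ℝ}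
    (hc : Continuous h) (hi : ∀ y, ∃ k : ℤ, h y = k) (a b : Y) : h a = h b := by
  suffices H : ∀ a b : Y, h a < h b → False by
    rcases lt_trichotomy (h a) (h b) with h1 | h1 | h1
    · exact absurd h1 (fun hh => H a b hh)
    · exact h1
    · exact absurd h1 (fun hh => H b a hh)
  intro a b hab
  obtain ⟨ka, hka⟩ := hi a
  obtain ⟨kb, hkb⟩ := hi b
  have hlt : ka < kb := by rwa [hka, hkb, Int.cast_lt] at hab
  have hmem : (ka : ℝ) + 1/2 ∈ Set.Icc (h a) (h b) := by
    constructor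
    · rw [hka]; linarith
    · rw [hkb]
      have : (ka : ℝ) + 1 ≤ kb := by exact_mod_cast hlt
      linarith
  obtain ⟨y, hy⟩ := intermediate_value_univ a b hc hmem
  obtain ⟨k, hk⟩ := hi y
  rw [hk] at hy
  have h2 : ((2 * k : ℤ) : ℝ) = ((2 * ka + 1 : ℤ) : ℝ) := by push_cast; linarith
  have := Int.cast_injective h2
  omega

lemma isLift_unique {g : C(Circ, Circ)} {F G : ℝ → ℝ} (hF : IsLift g F) (hG : IsLift g G)
    (h0 : F 0 = G 0) : ∀ x, F x = G x := by
  have hint : ∀ x, ∃ k : ℤ, F x - G x = k := by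
    intro x
    exact circ_coe_eq_coe_iff.mp ((hF.2.2.2 x).symm.trans (hG.2.2.2 x))
  intro x
  have := intConst (h := fun x => F x - G x) (hF.1.sub hG.1) hint x 0
  simp only [h0, sub_self] at this
  linarith

lemma lift_bound {F G : ℝ → ℝ} (hFm : Monotone F) (hFp : ∀ x, F (x + 1) = F x + 1)
    (hGm : Monotone G) (hGp : ∀ x, G (x + 1) = G x + 1) (h0 : F 0 = G 0) (x : ℝ) :
    |F x - G x| ≤ 1 := by
  have hxy : x = Int.fract x + (⌊x⌋ : ℤ) := by
    rw [Int.fract]; push_cast; ring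
  have hF1 : F 1 = F 0 + 1 := by simpa using hFp 0
  have hG1 : G 1 = G 0 + 1 := by simpa using hGp 0
  have e1 : F x = F (Int.fract x) + ⌊x⌋ := by
    have := addInt hFp (Int.fract x) ⌊x⌋
    rwa [Int.fract_add_floor] at this
  have e2 : G x = G (Int.fract x) + ⌊x⌋ := by
    have := addInt hGp (Int.fract x) ⌊x⌋
    rwa [Int.fract_add_floor] at this
  have b1 : F 0 ≤ F (Int.fract x) := hFm (Int.fract_nonneg x)
  have b2 : F (Int.fract x) ≤ F 1 := hFm (Int.fract_lt_one x).le
  have b3 : G 0 ≤ G (Int.fract x) := hGm (Int.fract_nonneg x)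
  have b4 : G (Int.fract x) ≤ G 1 := hGm (Int.fract_lt_one x).le
  rw [abs_le]
  constructor <;> [skip; skip] <;> rw [e1, e2] <;>
    [linarith [hF1, hG1]; linarith [hF1, hG1]]

lemma lift_close {g g' : C(Circ, Circ)} {G G' : ℝ → ℝ} (hG : IsLift g G) (hG' : IsLift g' G')
    (h0 : G 0 = G' 0) {ε : ℝ} (hε : ε < 1/2) (hd : ∀ q : Circ, dist (g q) (g' q) ≤ ε)
    (x : ℝ) : |G x - G' x| ≤ ε := by
  have hε0 : 0 ≤ ε := le_trans dist_nonneg (hd ((0:ℝ) : Circ))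
  set D : ℝ → ℝ := fun y => G y - G' y with hD
  have hDc : Continuous D := hG.1.sub hG'.1
  have key : ∀ y, |D y| < 1/2 → |D y| ≤ ε := by
    intro y hy
    have h1 : dist (g (y : Circ)) (g' (y : Circ)) = ‖((D y : ℝ) : Circ)‖ := by
      rw [hG.2.2.2, hG'.2.2.2, dist_eq_norm, ← AddCircle.coe_sub]
    have h2 : ‖((D y : ℝ) : Circ)‖ = |D y| := circ_norm_coe hy.le
    have := hd ((y : ℝ) : Circ)
    rw [h1, h2] at this
    exact this
  have hset : {y : ℝ | |D y| ≤ ε} = {y : ℝ | |D y| < 1/2} := by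
    ext y
    exact ⟨fun hy => lt_of_le_of_lt hy hε, fun hy => key y hy⟩
  have hclopen : IsClopen {y : ℝ | |D y| ≤ ε} := by
    constructor
    · exact isClosed_le (continuous_abs.comp hDc) continuous_const
    · rw [hset]
      exact isOpen_lt (continuous_abs.comp hDc) continuous_const
  have h0mem : (0 : ℝ) ∈ {y : ℝ | |D y| ≤ ε} := by
    simp only [Set.mem_setOf_eq, hD, h0, sub_self, abs_zero]
    exact hε0
  have := hclopen.eq_univ ⟨0, h0mem⟩
  have hx : x ∈ {y : ℝ | |D y| ≤ ε} := this ▸ Set.mem_univ x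
  exact hx


variable {n m : ℕ}

/-- Canonical lift of `g`, normalized near `F` at `0`. -/
def canLift (F : ℝ → ℝ) (g : ECirc n m) : ℝ → ℝ :=
  fun x => Classical.choose g.2.1 x - round (Classical.choose g.2.1 0 - F 0)

lemma isLift_canLift (F : ℝ → ℝ) (g : ECirc n m) : IsLift g.1 (canLift F g) := by
  obtain ⟨hc, hm, hp, hcompat⟩ := Classical.choose_spec g.2.1
  set G := Classical.choose g.2.1
  set j := round (G 0 - F 0)
  refine ⟨hc.sub continuous_const, fun a b hab => sub_le_sub_right (hm hab) _, fun x => ?_, fun x => ?_⟩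
  · show G (x + 1) - j = G x - j + 1
    rw [hp]; ring
  · show g.1 (x : Circ) = ((G x - j : ℝ) : Circ)
    rw [hcompat x]
    exact circ_coe_eq_coe_iff.mpr ⟨j, by ring⟩

lemma canLift_zero {F : ℝ → ℝ} {f g : ECirc n m} (hF : IsLift f.1 F)
    (h : g.1 ((0:ℝ) : Circ) = f.1 ((0:ℝ) : Circ)) : canLift F g 0 = F 0 := by
  obtain ⟨hc, hm, hp, hcompat⟩ := Classical.choose_spec g.2.1
  set G := Classical.choose g.2.1
  have h1 : ((G 0 : ℝ) : Circ) = ((F 0 : ℝ) : Circ) := by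
    rw [← hcompat 0, ← hF.2.2.2 0, h]
  obtain ⟨k, hk⟩ := circ_coe_eq_coe_iff.mp h1
  show G 0 - round (G 0 - F 0) = F 0
  rw [hk, round_intCast]
  linarith [hk]

lemma marked_finite (m : ℕ) : (markedCirc m).Finite := by
  apply Set.Finite.subset ((Set.finite_Icc (0:ℤ) m).image
    (fun k : ℤ => (((k : ℝ) / ((m : ℝ) + 1) : ℝ) : Circ)))
  rintro x ⟨k, rfl⟩
  have hm1 : (0:ℤ) < (m : ℤ) + 1 := by positivity
  refine ⟨k % ((m:ℤ) + 1), ⟨Int.emod_nonneg k hm1.ne', ?_⟩, ?_⟩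
  · have := Int.emod_lt_of_pos k hm1
    omega
  · have h2 : k = k % ((m:ℤ)+1) + ((m:ℤ)+1) * (k / ((m:ℤ)+1)) := by
      have := Int.mul_ediv_add_emod k ((m:ℤ)+1)
      linarith
    have hk : (k : ℝ) = ((k % ((m:ℤ)+1) : ℤ) : ℝ) + ((m:ℝ)+1) * ((k / ((m:ℤ)+1) : ℤ) : ℝ) := by
      exact_mod_cast h2
    have hmne : (m:ℝ) + 1 ≠ 0 := by positivity
    symm
    apply circ_coe_eq_coe_iff.mpr
    refine ⟨(k / ((m:ℤ)+1) : ℤ), ?_⟩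
    rw [hk]
    field_simp
    ring

lemma zero_mem_marked (n : ℕ) : ((0:ℝ) : Circ) ∈ markedCirc n := by
  refine ⟨0, ?_⟩
  norm_num

/-- Along a path in `ECirc n m`, the value at the basepoint is constant. -/
lemma eval_zero_const {f g : ECirc n m} (γ : Path f g) (s : unitInterval) :
    (γ s).1 ((0:ℝ) : Circ) = f.1 ((0:ℝ) : Circ) := by
  set ψ : unitInterval → Circ := fun s => (γ s).1 ((0:ℝ) : Circ) with hψdef
  have hψc : Continuous ψ :=
    (continuous_eval_const _).comp (continuous_subtype_val.comp γ.continuous)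
  have hmem : ∀ s, ψ s ∈ markedCirc m := fun s => (γ s).2.2 _ (zero_mem_marked n)
  have hclopen : IsClopen {s | ψ s = ψ 0} := by
    constructor
    · exact isClosed_eq hψc continuous_const
    · have : {s | ψ s = ψ 0}ᶜ = ψ ⁻¹' (markedCirc m \ {ψ 0}) := by
        ext s
        simp only [Set.mem_compl_iff, Set.mem_setOf_eq, Set.mem_preimage, Set.mem_diff,
          Set.mem_singleton_iff]
        exact ⟨fun h => ⟨hmem s, h⟩, fun h => h.2⟩
      rw [← isClosed_compl_iff, this]
      exact IsClosed.preimage hψc ((marked_finite m).diff : (markedCirc m \ {ψ 0}).Finite).isClosed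
  have huniv := hclopen.eq_univ ⟨0, rfl⟩
  have hs : s ∈ {s | ψ s = ψ 0} := huniv ▸ Set.mem_univ s
  have h0 : ψ 0 = f.1 ((0:ℝ) : Circ) := by
    simp only [hψdef, γ.source]
  exact hs.trans h0

lemma marked_int {m : ℕ} {r : ℝ} (h : (r : Circ) ∈ markedCirc m) :
    ∃ a : ℤ, ((m:ℝ)+1) * r = a := by
  obtain ⟨j, hj⟩ := h
  obtain ⟨l, hl⟩ := circ_coe_eq_coe_iff.mp hj
  refine ⟨j + ((m:ℤ)+1) * l, ?_⟩
  have hmne : (m:ℝ)+1 ≠ 0 := by positivity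
  have hr : r = (j:ℝ)/((m:ℝ)+1) + l := by linarith
  rw [hr]
  push_cast
  field_simp

lemma canLift_marked {f g : ECirc n m} {F : ℝ → ℝ} (hF : IsLift f.1 F) (hg : Joined f g)
    (k : ℤ) :
    canLift F g ((k:ℝ)/((n:ℝ)+1)) = F ((k:ℝ)/((n:ℝ)+1)) := by
  set γ := hg.somePath with hγdef
  set x : ℝ := (k:ℝ)/((n:ℝ)+1) with hxdef
  have hx : (x : Circ) ∈ markedCirc n := ⟨k, rfl⟩
  have hzero : ∀ s, canLift F (γ s) 0 = F 0 := fun s => canLift_zero hF (eval_zero_const γ s)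
  set e : unitInterval → ℝ := fun s => canLift F (γ s) x with he
  have hec : Continuous e := by
    rw [Metric.continuous_iff]
    intro s₀ ε hε
    obtain ⟨δ, hδ, hδ'⟩ := Metric.continuous_iff.mp γ.continuous s₀ (min (ε/2) (1/4))
      (by positivity)
    refine ⟨δ, hδ, fun s hs => ?_⟩
    have hd := hδ' s hs
    have hdd : dist (γ s) (γ s₀) < 1/2 :=
      lt_of_lt_of_le hd (le_trans (min_le_right _ _) (by norm_num))
    have key : |e s - e s₀| ≤ dist (γ s) (γ s₀) := by
      refine lift_close (isLift_canLift F (γ s)) (isLift_canLift F (γ s₀))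
        ((hzero s).trans (hzero s₀).symm) hdd (fun q => ?_) x
      calc dist ((γ s).1 q) ((γ s₀).1 q) ≤ dist (γ s).1 (γ s₀).1 :=
            ContinuousMap.dist_apply_le_dist q
        _ = dist (γ s) (γ s₀) := (Subtype.dist_eq _ _).symm
    rw [Real.dist_eq]
    calc |e s - e s₀| ≤ dist (γ s) (γ s₀) := key
      _ < min (ε/2) (1/4) := hd
      _ ≤ ε/2 := min_le_left _ _
      _ < ε := by linarith
  have hDint : ∀ s, ∃ a : ℤ, ((m:ℝ)+1) * (e s - F x) = a := by
    intro s
    have hmemb : ((e s : ℝ) : Circ) ∈ markedCirc m := by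
      have h1 : ((e s : ℝ) : Circ) = (γ s).1 (x : Circ) :=
        ((isLift_canLift F (γ s)).2.2.2 x).symm
      rw [h1]
      exact (γ s).2.2 _ hx
    have hmembF : ((F x : ℝ) : Circ) ∈ markedCirc m := by
      rw [← hF.2.2.2 x]
      exact f.2.2 _ hx
    obtain ⟨a, ha⟩ := marked_int hmemb
    obtain ⟨b, hb⟩ := marked_int hmembF
    exact ⟨a - b, by push_cast; rw [mul_sub, ha, hb]⟩
  have hDc : Continuous (fun s => ((m:ℝ)+1) * (e s - F x)) :=
    continuous_const.mul (hec.sub continuous_const)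
  have hconst := intConst hDc hDint 1 0
  have h0 : e 0 = F x := by
    show canLift F (γ 0) x = F x
    rw [hγdef, hg.somePath.source]
    exact isLift_unique (isLift_canLift F f) hF (canLift_zero hF rfl) x
  have hmne : (m:ℝ)+1 ≠ 0 := by positivity
  have h1 : e 1 = F x := by
    have : ((m:ℝ)+1) * (e 1 - F x) = 0 := by rw [hconst, h0]; ring
    have := mul_eq_zero.mp this
    rcases this with h | h
    · exact absurd h hmne
    · linarith
  have : canLift F (γ 1) x = F x := h1
  rwa [hγdef, hg.somePath.target] at this

lemma comp_zero_eq {f g : ECirc n m} (hg : Joined f g) :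
    g.1 ((0:ℝ) : Circ) = f.1 ((0:ℝ) : Circ) := by
  have := eval_zero_const hg.somePath 1
  rwa [hg.somePath.target] at this

lemma canLift_zero' {F : ℝ → ℝ} {f g : ECirc n m} (hF : IsLift f.1 F) (hg : Joined f g) :
    canLift F g 0 = F 0 :=
  canLift_zero hF (comp_zero_eq hg)

/-- The straight-line interpolation of lifts. -/
def Ht (F : ℝ → ℝ) (t : unitInterval) (g : ECirc n m) : ℝ → ℝ :=
  fun x => (1 - (t:ℝ)) * canLift F g x + (t:ℝ) * F x

lemma Ht_cont (F : ℝ → ℝ) (hFc : Continuous F) (t : unitInterval) (g : ECirc n m) :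
    Continuous (Ht F t g) :=
  (continuous_const.mul (isLift_canLift F g).1).add (continuous_const.mul hFc)

lemma Ht_per (F : ℝ → ℝ) (hFp : ∀ x, F (x+1) = F x + 1) (t : unitInterval) (g : ECirc n m) :
    ∀ x, Ht F t g (x+1) = Ht F t g x + 1 := by
  intro x
  unfold Ht
  rw [(isLift_canLift F g).2.2.1 x, hFp x]
  ring

lemma Ht_mono (F : ℝ → ℝ) (hFm : Monotone F) (t : unitInterval) (g : ECirc n m) :
    Monotone (Ht F t g) := by
  intro a b hab
  have h1 := (isLift_canLift F g).2.1 hab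
  have h2 := hFm hab
  have ht0 : 0 ≤ (t:ℝ) := t.2.1
  have ht1 : (t:ℝ) ≤ 1 := t.2.2
  have e1 := mul_le_mul_of_nonneg_left h1 (show (0:ℝ) ≤ 1 - (t:ℝ) by linarith)
  have e2 := mul_le_mul_of_nonneg_left h2 ht0
  simp only [Ht]
  linarith

/-- The homotopy at the level of `ECirc`. -/
def Emap {f : ECirc n m} {F : ℝ → ℝ} (hF : IsLift f.1 F) (t : unitInterval)
    (g : ↥(pathComponent f)) : ECirc n m :=
  ⟨descend (Ht F t g.1) (Ht_cont F hF.1 t g.1) (Ht_per F hF.2.2.1 t g.1),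
   ⟨Ht F t g.1, isLift_descend (Ht_cont F hF.1 t g.1) (Ht_mono F hF.2.1 t g.1)
      (Ht_per F hF.2.2.1 t g.1)⟩,
   by
     rintro q ⟨k, rfl⟩
     have hjg : Joined f g.1 := g.2
     have heq : Ht F t g.1 ((k:ℝ)/((n:ℝ)+1)) = F ((k:ℝ)/((n:ℝ)+1)) := by
       unfold Ht
       rw [canLift_marked hF hjg k]
       ring
     rw [descend_coe, heq, ← hF.2.2.2]
     exact f.2.2 _ ⟨k, rfl⟩⟩

lemma Emap_coe {f : ECirc n m} {F : ℝ → ℝ} (hF : IsLift f.1 F) (t : unitInterval)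
    (g : ↥(pathComponent f)) (x : ℝ) :
    (Emap hF t g).1 (x : Circ) = ((Ht F t g.1 x : ℝ) : Circ) := rfl

lemma Emap_zero {f : ECirc n m} {F : ℝ → ℝ} (hF : IsLift f.1 F) (g : ↥(pathComponent f)) :
    Emap hF 0 g = g.1 := by
  apply Subtype.ext
  apply ContinuousMap.ext
  intro q
  obtain ⟨x, rfl⟩ := circ_surj q
  rw [Emap_coe]
  have hfun : Ht F 0 g.1 x = canLift F g.1 x := by simp [Ht]
  rw [hfun]
  exact ((isLift_canLift F g.1).2.2.2 x).symm

lemma Emap_one {f : ECirc n m} {F : ℝ → ℝ} (hF : IsLift f.1 F) (g : ↥(pathComponent f)) :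
    Emap hF 1 g = f := by
  apply Subtype.ext
  apply ContinuousMap.ext
  intro q
  obtain ⟨x, rfl⟩ := circ_surj q
  rw [Emap_coe]
  have hfun : Ht F 1 g.1 x = F x := by simp [Ht]
  rw [hfun]
  exact (hF.2.2.2 x).symm

lemma Emap_dist {f : ECirc n m} {F : ℝ → ℝ} (hF : IsLift f.1 F) (t t' : unitInterval)
    (g g' : ↥(pathComponent f)) (hgg : dist g.1.1 g'.1.1 < 1/2) :
    dist (Emap hF t g).1 (Emap hF t' g').1 ≤ |(t:ℝ) - (t':ℝ)| + dist g.1.1 g'.1.1 := by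
  rw [ContinuousMap.dist_le (by positivity)]
  intro q
  obtain ⟨x, rfl⟩ := circ_surj q
  rw [Emap_coe, Emap_coe]
  refine le_trans (circ_dist_coe_le _ _) ?_
  have hjg : Joined f g.1 := g.2
  have hjg' : Joined f g'.1 := g'.2
  have h00 : canLift F g.1 0 = canLift F g'.1 0 := by
    rw [canLift_zero' hF hjg, canLift_zero' hF hjg']
  have hL : |canLift F g.1 x - canLift F g'.1 x| ≤ dist g.1.1 g'.1.1 := by
    refine lift_close (isLift_canLift F g.1) (isLift_canLift F g'.1) h00 hgg (fun q => ?_) x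
    exact ContinuousMap.dist_apply_le_dist q
  have hB : |F x - canLift F g'.1 x| ≤ 1 := by
    refine lift_bound hF.2.1 hF.2.2.1 (isLift_canLift F g'.1).2.1 (isLift_canLift F g'.1).2.2.1
      ?_ x
    rw [canLift_zero' hF hjg']
  have ht0 : 0 ≤ (t:ℝ) := t.2.1
  have ht1 : (t:ℝ) ≤ 1 := t.2.2
  set a := canLift F g.1 x
  set a' := canLift F g'.1 x
  have halg : Ht F t g.1 x - Ht F t' g'.1 x
      = (1 - (t:ℝ)) * (a - a') + ((t:ℝ) - (t':ℝ)) * (F x - a') := by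
    simp only [Ht]
    ring
  rw [halg]
  calc |(1 - (t:ℝ)) * (a - a') + ((t:ℝ) - (t':ℝ)) * (F x - a')|
      ≤ |(1 - (t:ℝ)) * (a - a')| + |((t:ℝ) - (t':ℝ)) * (F x - a')| := abs_add_le _ _
    _ = (1 - (t:ℝ)) * |a - a'| + |(t:ℝ) - (t':ℝ)| * |F x - a'| := by
        rw [abs_mul, abs_mul, abs_of_nonneg (by linarith : (0:ℝ) ≤ 1 - (t:ℝ))]
    _ ≤ 1 * dist g.1.1 g'.1.1 + |(t:ℝ) - (t':ℝ)| * 1 := by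
        refine add_le_add ?_ ?_
        · refine mul_le_mul (by linarith) hL (abs_nonneg _) (by norm_num)
        · exact mul_le_mul_of_nonneg_left hB (abs_nonneg _)
    _ = |(t:ℝ) - (t':ℝ)| + dist g.1.1 g'.1.1 := by ring

lemma Emap_cont {f : ECirc n m} {F : ℝ → ℝ} (hF : IsLift f.1 F) :
    Continuous (fun p : unitInterval × ↥(pathComponent f) => (Emap hF p.1 p.2).1) := by
  rw [Metric.continuous_iff]
  intro p ε hε
  refine ⟨min (ε/3) (1/4), by positivity, fun q hq => ?_⟩
  rw [Prod.dist_eq] at hq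
  have ht : dist q.1 p.1 < min (ε/3) (1/4) := lt_of_le_of_lt (le_max_left _ _) hq
  have hg : dist q.2 p.2 < min (ε/3) (1/4) := lt_of_le_of_lt (le_max_right _ _) hq
  have hgval : dist q.2.1.1 p.2.1.1 = dist q.2 p.2 := by
    rw [Subtype.dist_eq, Subtype.dist_eq]
  have htval : |(q.1:ℝ) - (p.1:ℝ)| = dist q.1 p.1 := by
    rw [Subtype.dist_eq, Real.dist_eq]
  have hgg : dist q.2.1.1 p.2.1.1 < 1/2 := by
    rw [hgval]
    exact lt_of_lt_of_le hg (le_trans (min_le_right _ _) (by norm_num))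
  calc dist (Emap hF q.1 q.2).1 (Emap hF p.1 p.2).1
      ≤ |(q.1:ℝ) - (p.1:ℝ)| + dist q.2.1.1 p.2.1.1 := Emap_dist hF q.1 p.1 q.2 p.2 hgg
    _ < min (ε/3) (1/4) + min (ε/3) (1/4) := by
        rw [htval, hgval]
        exact add_lt_add ht hg
    _ ≤ ε/3 + ε/3 := add_le_add (min_le_left _ _) (min_le_left _ _)
    _ < ε := by linarith

lemma Emap_mem {f : ECirc n m} {F : ℝ → ℝ} (hF : IsLift f.1 F) (t : unitInterval)
    (g : ↥(pathComponent f)) : Emap hF t g ∈ pathComponent f := by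
  have hjg : Joined f g.1 := g.2
  refine hjg.trans ⟨?_⟩
  refine { toFun := fun s => Emap hF ⟨(s:ℝ) * (t:ℝ), unitInterval.mul_mem s.2 t.2⟩ g,
           continuous_toFun := ?_, source' := ?_, target' := ?_ }
  · refine Continuous.subtype_mk ?_ _
    exact (Emap_cont hF).comp
      ((((continuous_subtype_val.mul continuous_const).subtype_mk _)).prodMk continuous_const)
  · have h0 : (⟨((0:unitInterval):ℝ) * (t:ℝ), unitInterval.mul_mem (0:unitInterval).2 t.2⟩ :
        unitInterval) = 0 := by
      ext
      simp
    show Emap hF ⟨((0:unitInterval):ℝ) * (t:ℝ), unitInterval.mul_mem (0:unitInterval).2 t.2⟩ g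
      = g.1
    rw [h0]
    exact Emap_zero hF g
  · have h1 : (⟨((1:unitInterval):ℝ) * (t:ℝ), unitInterval.mul_mem (1:unitInterval).2 t.2⟩ :
        unitInterval) = t := by
      ext
      simp
    show Emap hF ⟨((1:unitInterval):ℝ) * (t:ℝ), unitInterval.mul_mem (1:unitInterval).2 t.2⟩ g
      = Emap hF t g
    rw [h1]

end CircAux


open CircAux in
theorem stmt_3 (n m : ℕ) (f : ECirc n m) :
    ContractibleSpace ↥(pathComponent f) := by
  obtain ⟨F, hF⟩ := f.2.1
  rw [contractible_iff_id_nullhomotopic]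
  refine ⟨⟨f, mem_pathComponent_self f⟩, ⟨?_⟩⟩
  refine { toFun := fun p => ⟨Emap hF p.1 p.2, Emap_mem hF p.1 p.2⟩,
           continuous_toFun := ?_, map_zero_left := ?_, map_one_left := ?_ }
  · exact ((Emap_cont hF).subtype_mk _).subtype_mk _
  · intro g
    exact Subtype.ext (Emap_zero hF g)
  · intro g
    exact Subtype.ext (Emap_one hF g)
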